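/- Let G be a connected AT-free graph with nonadjacent vertices s,t such that N_G(s)∩N_G(t)=∅, let A ⊆ V(G)∖{s,t} with ({s}∪A)∩N_G[t]=∅, let H be the graph on V(G) with edge set E(G) ∪ {(s,a) : a ∈ N_G[A]}, and let S_1 be the unique minimal s,t-separator of H with S_1 ⊆ N_H(s). If A ⊆ C_s(G−S_1), then S_1 is a minimal s,t-separator of G and it is the unique minimal s,t-separator of G close to sA. -/

import Mathlib

variable {V : Type*}

/-- Reachability in `G` by a walk avoiding the vertex set `S`. -/
def ReachAvoid (G : SimpleGraph V) (S : Set V) (u v : V) : Prop :=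
  ∃ w : G.Walk u v, ∀ x ∈ w.support, x ∉ S

/-- The connected component of `G − S` containing `s`, as a subset of `V`. -/
def compOf (G : SimpleGraph V) (S : Set V) (s : V) : Set V :=
  {v | ReachAvoid G S s v}

/-- `S` is an `s,t`-separator of `G`. -/
def IsSep (G : SimpleGraph V) (s t : V) (S : Set V) : Prop :=
  s ∉ S ∧ t ∉ S ∧ ¬ ReachAvoid G S s t

/-- `S` is a minimal `s,t`-separator of `G`. -/
def IsMinSep (G : SimpleGraph V) (s t : V) (S : Set V) : Prop :=
  IsSep G s t S ∧ ∀ S' ⊂ S, ¬ IsSep G s t S'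

/-- The open neighborhood of a vertex set `X`. -/
def nbhd (G : SimpleGraph V) (X : Set V) : Set V :=
  {v | v ∉ X ∧ ∃ x ∈ X, G.Adj x v}

/-- The closed neighborhood of a vertex `v`. -/
def clNbhd (G : SimpleGraph V) (v : V) : Set V :=
  insert v (G.neighborSet v)

/-- `S` is a minimal `s,t`-separator close to `sA`. -/
def CloseTo (G : SimpleGraph V) (s t : V) (A : Set V) (S : Set V) : Prop :=
  IsMinSep G s t S ∧ A ⊆ compOf G S s ∧
    ∀ T, IsMinSep G s t T → T ≠ S → A ⊆ compOf G T s →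
      ¬ compOf G T s ⊆ compOf G S s

/-- `G` contains no asteroidal triple. -/
def IsATFree (G : SimpleGraph V) : Prop :=
  ¬ ∃ a b c : V, a ≠ b ∧ a ≠ c ∧ b ≠ c ∧
    ¬ G.Adj a b ∧ ¬ G.Adj a c ∧ ¬ G.Adj b c ∧
    (∃ w : G.Walk a b, ∀ x ∈ w.support, x ∉ clNbhd G c) ∧
    (∃ w : G.Walk a c, ∀ x ∈ w.support, x ∉ clNbhd G b) ∧
    (∃ w : G.Walk b c, ∀ x ∈ w.support, x ∉ clNbhd G a)

/-- `S` is an `A,B`-separator. -/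
def IsABSep (G : SimpleGraph V) (A B : Set V) (S : Set V) : Prop :=
  S ⊆ (A ∪ B)ᶜ ∧ ∀ a ∈ A, ∀ b ∈ B, ¬ ReachAvoid G S a b

/-- `S` is a minimal `A,B`-separator. -/
def IsMinABSep (G : SimpleGraph V) (A B S : Set V) : Prop :=
  IsABSep G A B S ∧ ∀ S' ⊂ S, ¬ IsABSep G A B S'

/-- `S` is a safe (connectivity-preserving) `A,B`-separator: removing `S`
leaves two distinct components, one containing `A` and one containing `B`. -/
def IsSafeSep (G : SimpleGraph V) (A B S : Set V) : Prop :=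
  S ⊆ (A ∪ B)ᶜ ∧ ∃ a b : V, a ∉ S ∧ b ∉ S ∧
    A ⊆ compOf G S a ∧ B ⊆ compOf G S b ∧
    Disjoint (compOf G S a) (compOf G S b)

/-- The induced subgraph on `X` is connected (any two vertices of `X` are joined
by a walk staying in `X`). -/
def ConnIn (G : SimpleGraph V) (X : Set V) : Prop :=
  ∀ x ∈ X, ∀ y ∈ X, ∃ w : G.Walk x y, ∀ z ∈ w.support, z ∈ X

/-- The graph obtained from `G` by contracting `{s} ∪ A` to the vertex `s`
(the vertices of `A` become isolated). -/
def contractGraph (G : SimpleGraph V) (s : V) (A : Set V) : SimpleGraph V where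
  Adj u v := u ∉ A ∧ v ∉ A ∧ u ≠ v ∧
    (G.Adj u v ∨ (u = s ∧ ∃ a ∈ A, G.Adj a v) ∨ (v = s ∧ ∃ a ∈ A, G.Adj a u))
  symm := by
    refine ⟨?_⟩
    rintro u v ⟨hu, hv, hne, h⟩
    refine ⟨hv, hu, hne.symm, ?_⟩
    rcases h with h | h | h
    · exact Or.inl h.symm
    · exact Or.inr (Or.inr h)
    · exact Or.inr (Or.inl h)
  loopless := by
    refine ⟨?_⟩
    rintro u ⟨_, _, hne, _⟩
    exact hne rfl

/-- The graph obtained from `G` by adding all edges from `s` to `N_G[A]`. -/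
def addApex (G : SimpleGraph V) (s : V) (A : Set V) : SimpleGraph V where
  Adj u v := G.Adj u v ∨
    (u = s ∧ v ≠ s ∧ v ∈ A ∪ nbhd G A) ∨
    (v = s ∧ u ≠ s ∧ u ∈ A ∪ nbhd G A)
  symm := by
    refine ⟨?_⟩
    rintro u v (h | h | h)
    · exact Or.inl h.symm
    · exact Or.inr (Or.inr h)
    · exact Or.inr (Or.inl h)
  loopless := by
    refine ⟨?_⟩
    rintro u (h | ⟨h1, h2, _⟩ | ⟨h1, h2, _⟩)
    · exact G.irrefl h
    · exact h2 h1
    · exact h2 h1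

/-- The graph obtained from `G` by subdividing every edge. -/
def subdiv (G : SimpleGraph V) : SimpleGraph (V ⊕ G.edgeSet) where
  Adj x y :=
    match x, y with
    | Sum.inl u, Sum.inr e => u ∈ (e : Sym2 V)
    | Sum.inr e, Sum.inl u => u ∈ (e : Sym2 V)
    | _, _ => False
  symm := by
    refine ⟨?_⟩
    rintro (u | e) (v | f) h <;> exact h
  loopless := by
    refine ⟨?_⟩
    rintro (u | e) h <;> exact h

/-- The instance `2Dis(G,A,B)` of 2-Disjoint-Connected-Subgraphs has a solution. -/
def TwoDisSolvable (G : SimpleGraph V) (A B : Set V) : Prop :=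
  ∃ A₁ B₁ : Set V, Disjoint A₁ B₁ ∧ A ⊆ A₁ ∧ B ⊆ B₁ ∧
    ConnIn G A₁ ∧ ConnIn G B₁

section StmtHelpers

open SimpleGraph

lemma reachAvoid_mono {G : SimpleGraph V} {S S' : Set V} (h : S' ⊆ S) {u v : V}
    (hr : ReachAvoid G S u v) : ReachAvoid G S' u v := by
  obtain ⟨w, hw⟩ := hr
  exact ⟨w, fun x hx hxS => hw x hx (h hxS)⟩

lemma reachAvoid_refl {G : SimpleGraph V} {S : Set V} {u : V} (hu : u ∉ S) :
    ReachAvoid G S u u :=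
  ⟨Walk.nil, by simpa using hu⟩

lemma reachAvoid_trans {G : SimpleGraph V} {S : Set V} {u v w : V}
    (h1 : ReachAvoid G S u v) (h2 : ReachAvoid G S v w) : ReachAvoid G S u w := by
  obtain ⟨p, hp⟩ := h1
  obtain ⟨q, hq⟩ := h2
  refine ⟨p.append q, fun x hx => ?_⟩
  rcases (Walk.mem_support_append_iff _ _).mp hx with hx | hx
  · exact hp x hx
  · exact hq x hx

lemma reachAvoid_concat {G : SimpleGraph V} {S : Set V} {u v w : V}
    (h1 : ReachAvoid G S u v) (h : G.Adj v w) (hw : w ∉ S) : ReachAvoid G S u w := by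
  obtain ⟨p, hp⟩ := h1
  refine ⟨p.concat h, fun x hx => ?_⟩
  rw [Walk.support_concat, List.mem_append] at hx
  rcases hx with hx | hx
  · exact hp x hx
  · rw [List.mem_singleton] at hx
    exact hx ▸ hw

lemma reachAvoid_prefix {G : SimpleGraph V} {S : Set V} {u v : V}
    (w : G.Walk u v) (hw : ∀ x ∈ w.support, x ∉ S) {y : V} (hy : y ∈ w.support) :
    ReachAvoid G S u y := by
  classical
  exact ⟨w.takeUntil y hy, fun x hx => hw x (w.support_takeUntil_subset hy hx)⟩

lemma reachAvoid_le {G H : SimpleGraph V} (hle : ∀ ⦃a b : V⦄, G.Adj a b → H.Adj a b)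
    {S : Set V} {u v : V} (h : ReachAvoid G S u v) : ReachAvoid H S u v := by
  obtain ⟨w, hw⟩ := h
  induction w with
  | nil => exact ⟨Walk.nil, by simpa using hw⟩
  | cons h' p ih =>
    obtain ⟨q, hq⟩ := ih (fun x hx => hw x (by simp [hx]))
    refine ⟨Walk.cons (hle h') q, fun x hx => ?_⟩
    rw [Walk.support_cons, List.mem_cons] at hx
    rcases hx with hx | hx
    · exact hw _ (by simp [hx])
    · exact hq x hx

/-- If a walk from `u ∉ S` hits `S`, there is a first hit `z ∈ S`, reached from a
vertex `u'` by an edge, with a walk from `u` to `u'` entirely avoiding `S`. -/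
lemma firstHit {G : SimpleGraph V} {S : Set V} :
    ∀ {u v : V} (w : G.Walk u v), u ∉ S → (∃ x ∈ w.support, x ∈ S) →
      ∃ z ∈ S, z ∈ w.support ∧ ∃ u' : V, G.Adj u' z ∧
        ∃ p : G.Walk u u', ∀ x ∈ p.support, x ∉ S ∧ x ∈ w.support := by
  intro u v w
  induction w with
  | nil =>
    intro hu hhit
    obtain ⟨x, hx, hxS⟩ := hhit
    simp only [Walk.support_nil, List.mem_singleton] at hx
    exact absurd (hx ▸ hxS) hu
  | @cons u a v h p ih =>
    intro hu hhit
    by_cases ha : a ∈ S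
    · exact ⟨a, ha, by simp, u, h, Walk.nil, by simpa using hu⟩
    · have hhit' : ∃ x ∈ p.support, x ∈ S := by
        obtain ⟨x, hx, hxS⟩ := hhit
        rw [Walk.support_cons, List.mem_cons] at hx
        rcases hx with hx | hx
        · exact absurd (hx ▸ hxS) hu
        · exact ⟨x, hx, hxS⟩
      obtain ⟨z, hz, hzsup, u', hadj, q, hq⟩ := ih ha hhit'
      refine ⟨z, hz, by simp [hzsup], u', hadj, Walk.cons h q, fun x hx => ?_⟩
      rw [Walk.support_cons, List.mem_cons] at hx
      rcases hx with hx | hx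
      · exact ⟨hx ▸ hu, by simp [hx]⟩
      · exact ⟨(hq x hx).1, by simp [(hq x hx).2]⟩

/-- Walks in `addApex G s A` from `s` can be realized in `G`, provided every
vertex of `A` is reachable from `s` in `G` avoiding `S`. -/
lemma apex_reach {G : SimpleGraph V} {s : V} {A S : Set V}
    (hs : s ∉ S) (hA : ∀ a ∈ A, ReachAvoid G S s a) :
    ∀ {u v : V} (w : (addApex G s A).Walk u v),
      (∀ x ∈ w.support, x ∉ S) → ReachAvoid G S s u → ReachAvoid G S s v := by
  intro u v w
  induction w with
  | nil => exact fun _ hu => hu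
  | @cons u a v h p ih =>
    intro hw hu
    have haS : a ∉ S := hw a (by simp)
    have hp : ∀ x ∈ p.support, x ∉ S := fun x hx => hw x (by simp [hx])
    refine ih hp ?_
    rcases h with hG | ⟨hus, hane, haA⟩ | ⟨has, _, _⟩
    · exact reachAvoid_concat hu hG haS
    · rcases haA with hA' | ⟨hnA, x, hxA, hadj⟩
      · exact hA a hA'
      · exact reachAvoid_concat (hA x hxA) hadj haS
    · rw [has]
      exact reachAvoid_refl hs

lemma apex_reach' {G : SimpleGraph V} {s : V} {A S : Set V}
    (hs : s ∉ S) (hA : ∀ a ∈ A, ReachAvoid G S s a) {v : V}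
    (h : ReachAvoid (addApex G s A) S s v) : ReachAvoid G S s v := by
  obtain ⟨w, hw⟩ := h
  exact apex_reach hs hA w hw (reachAvoid_refl hs)

/-- A minimal `s,t`-separator equals the neighborhood of the component of `s`. -/
lemma minsep_eq_nbhd {G : SimpleGraph V} {s t : V} {S : Set V}
    (h : IsMinSep G s t S) : S = nbhd G (compOf G S s) := by
  obtain ⟨⟨hs, ht, hsep⟩, hmin⟩ := h
  ext z
  constructor
  · intro hzS
    have hss : S \ {z} ⊂ S := Set.sdiff_singleton_ssubset.mpr hzS
    have hnsep : ¬ IsSep G s t (S \ {z}) := hmin _ hss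
    have hreach : ReachAvoid G (S \ {z}) s t := by
      by_contra hmm
      exact hnsep ⟨fun h => hs h.1, fun h => ht h.1, hmm⟩
    obtain ⟨w, hw⟩ := hreach
    have hhit : ∃ x ∈ w.support, x ∈ S := by
      by_contra hx
      push_neg at hx
      exact hsep ⟨w, hx⟩
    obtain ⟨z', hz', hz'sup, u', hadj, p, hp⟩ := firstHit w hs hhit
    have hz'z : z' = z := by
      by_contra hne
      exact hw z' hz'sup ⟨hz', hne⟩
    subst hz'z
    refine ⟨?_, u', ⟨p, fun x hx => (hp x hx).1⟩, hadj⟩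
    · rintro ⟨q, hq⟩
      exact hq z' q.end_mem_support hz'
  · rintro ⟨hzc, x, hxc, hadj⟩
    by_contra hzS
    exact hzc (reachAvoid_concat hxc hadj hzS)

/-- If `S₁` is a minimal `s,t`-separator contained in `N(s)`, then the `s`-component
of `G − S₁` is contained in the `s`-component of `G − T` for any minimal
`s,t`-separator `T`. -/
lemma comp_subset_of_near {Γ : SimpleGraph V} {s t : V} {S₁ T : Set V}
    (hS₁ : IsMinSep Γ s t S₁) (hS₁N : ∀ z ∈ S₁, Γ.Adj s z)
    (hT : IsMinSep Γ s t T) :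
    compOf Γ S₁ s ⊆ compOf Γ T s := by
  classical
  obtain ⟨⟨hs1, ht1, hsep1⟩, _⟩ := hS₁
  obtain ⟨⟨hsT, htT, hsepT⟩, hminT⟩ := hT
  have hdisj : ∀ y, y ∈ compOf Γ S₁ s → y ∉ T := by
    intro y hyC hyT
    obtain ⟨P0, hP0⟩ := hyC
    have hyS1 : y ∉ S₁ := hP0 y P0.end_mem_support
    have hnsep : ¬ IsSep Γ s t (T \ {y}) := hminT _ (Set.sdiff_singleton_ssubset.mpr hyT)
    have hreach : ReachAvoid Γ (T \ {y}) s t := by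
      by_contra hmm
      exact hnsep ⟨fun h => hsT h.1, fun h => htT h.1, hmm⟩
    obtain ⟨W, hW⟩ := hreach
    have hyW : y ∈ W.support := by
      by_contra hyW
      exact hsepT ⟨W, fun x hx hxT => (hW x hx) ⟨hxT, fun he => hyW (he ▸ hx)⟩⟩
    have hty : t ∉ Set.singleton y := by
      rintro rfl
      exact htT hyT
    obtain ⟨z0, hz0, _, w', hadj, p, hp⟩ :=
      firstHit (S := (Set.singleton y)) W.reverse hty
        ⟨y, by rw [Walk.support_reverse]; simpa using hyW, rfl⟩
    have hz0y : z0 = y := hz0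
    rw [hz0y] at hadj
    have hRT : ∀ x ∈ p.support, x ∉ T := by
      intro x hx hxT
      have hxy : x ∉ Set.singleton y := (hp x hx).1
      have hxW : x ∈ W.support := by
        have := (hp x hx).2
        rwa [Walk.support_reverse, List.mem_reverse] at this
      exact hW x hxW ⟨hxT, hxy⟩
    have hhit1 : ∃ x ∈ p.support, x ∈ S₁ := by
      by_contra hno
      push_neg at hno
      apply hsep1
      refine reachAvoid_trans ⟨P0, hP0⟩ ⟨Walk.cons hadj.symm p.reverse, ?_⟩
      intro x hx
      rw [Walk.support_cons, List.mem_cons] at hx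
      rcases hx with hx | hx
      · exact hx ▸ hyS1
      · rw [Walk.support_reverse, List.mem_reverse] at hx
        exact hno x hx
    obtain ⟨z, hzp, hzS1⟩ := hhit1
    apply hsepT
    refine ⟨Walk.cons (hS₁N z hzS1) (p.takeUntil z hzp).reverse, ?_⟩
    intro x hx
    rw [Walk.support_cons, List.mem_cons] at hx
    rcases hx with hx | hx
    · exact hx ▸ hsT
    · rw [Walk.support_reverse, List.mem_reverse] at hx
      exact hRT x (p.support_takeUntil_subset hzp hx)
  intro x hx
  obtain ⟨w, hw⟩ := hx
  exact ⟨w, fun z hz hzT => hdisj z (reachAvoid_prefix w hw hz) hzT⟩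

end StmtHelpers

theorem stmt13 (G : SimpleGraph V) (hconn : G.Connected) (hat : IsATFree G)
    (s t : V) (hst : s ≠ t) (hadj : ¬ G.Adj s t)
    (hN : G.neighborSet s ∩ G.neighborSet t = ∅)
    (A : Set V) (hsA : s ∉ A) (htA : t ∉ A)
    (hAt : insert s A ∩ clNbhd G t = ∅)
    (S₁ : Set V) (hS₁ : IsMinSep (addApex G s A) s t S₁)
    (hS₁N : S₁ ⊆ (addApex G s A).neighborSet s)
    (hAC : A ⊆ compOf G S₁ s) :
    IsMinSep G s t S₁ ∧ CloseTo G s t A S₁ ∧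
      ∀ S' : Set V, CloseTo G s t A S' → S' = S₁ := by
  classical
  set H := addApex G s A with hH
  have hle : ∀ ⦃a b : V⦄, G.Adj a b → H.Adj a b := fun a b h => Or.inl h
  obtain ⟨⟨hs1, ht1, hsep1⟩, hmin1⟩ := hS₁
  -- S₁ is a minimal s,t-separator of G
  have hGmin : IsMinSep G s t S₁ := by
    refine ⟨⟨hs1, ht1, fun h => hsep1 (reachAvoid_le hle h)⟩, ?_⟩
    intro S' hss hsep'
    refine hmin1 S' hss ⟨hsep'.1, hsep'.2.1, fun h => hsep'.2.2 ?_⟩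
    exact apex_reach' hsep'.1 (fun a ha => reachAvoid_mono hss.subset (hAC ha)) h
  -- every minimal s,t-separator of G whose s-component contains A is minimal in H
  have factH : ∀ T, IsMinSep G s t T → A ⊆ compOf G T s → IsMinSep H s t T := by
    rintro T ⟨⟨hsT, htT, hsepT⟩, hminT⟩ hAT
    refine ⟨⟨hsT, htT, fun h => hsepT (apex_reach' hsT (fun a ha => hAT ha) h)⟩, ?_⟩
    intro T' hss hsep'
    exact hminT T' hss ⟨hsep'.1, hsep'.2.1, fun h => hsep'.2.2 (reachAvoid_le hle h)⟩
  -- the s-components in G and H agree for such separators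
  have compEq : ∀ T : Set V, s ∉ T → A ⊆ compOf G T s → compOf H T s = compOf G T s := by
    intro T hsT hAT
    ext v
    exact ⟨fun h => apex_reach' hsT (fun a ha => hAT ha) h, fun h => reachAvoid_le hle h⟩
  -- key comparison lemma
  have hkey : ∀ T, IsMinSep G s t T → A ⊆ compOf G T s →
      compOf G S₁ s ⊆ compOf G T s := by
    intro T hT hAT
    have h1 : compOf H S₁ s ⊆ compOf H T s :=
      comp_subset_of_near ⟨⟨hs1, ht1, hsep1⟩, hmin1⟩ (fun z hz => hS₁N hz)
        (factH T hT hAT)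
    rwa [compEq S₁ hs1 hAC, compEq T hT.1.1 hAT] at h1
  have hclose : CloseTo G s t A S₁ := by
    refine ⟨hGmin, hAC, ?_⟩
    intro T hT hne hAT hsub
    have heq : compOf G T s = compOf G S₁ s := hsub.antisymm (hkey T hT hAT)
    exact hne ((minsep_eq_nbhd hT).trans (heq ▸ (minsep_eq_nbhd hGmin).symm))
  refine ⟨hGmin, hclose, ?_⟩
  intro S' hS'
  by_contra hne
  exact hS'.2.2 S₁ hGmin (fun h => hne h.symm) hAC (hkey S' hS'.1 hS'.2.1)
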